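/- Let E_3 be the two-dimensional complex evolution algebra with structural matrix ((1,1),(−1,−1)) (i.e. e₁e₁ = e₁ + e₂, e₂e₂ = −e₁ − e₂). A linear map P : ℂ² → ℂ² is a Rota–Baxter operator of weight 1 on E_3 if and only if its matrix is one of the following, for some b ∈ ℂ: ((−1+b, b),(−b, −1−b)); ((−1−b, b),(b, −1−b)); ((b, b),(−b, −b)); ((−b, b),(b, −b)). -/
import Mathlib


/-- The evolution-algebra product on `ℂ²` determined by a structural matrix `A`:
`e_i · e_i = a_{i1} e₁ + a_{i2} e₂` and `e₁ · e₂ = e₂ · e₁ = 0`. -/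
noncomputable def evMulC (A : Matrix (Fin 2) (Fin 2) ℂ) (x y : Fin 2 → ℂ) : Fin 2 → ℂ :=
  fun k => x 0 * y 0 * A 0 k + x 1 * y 1 * A 1 k

/-- `P` is a Rota–Baxter operator of weight `lam` on the evolution algebra with structural
matrix `A`: `P(x)·P(y) = P(x·P(y) + P(x)·y + lam x·y)` for all `x, y`. -/
def IsRotaBaxter (A : Matrix (Fin 2) (Fin 2) ℂ) (lam : ℂ)
    (P : (Fin 2 → ℂ) →ₗ[ℂ] (Fin 2 → ℂ)) : Prop :=
  ∀ x y : Fin 2 → ℂ,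
    evMulC A (P x) (P y) = P (evMulC A x (P y) + evMulC A (P x) y + lam • evMulC A x y)

lemma vec_decomp' (x : Fin 2 → ℂ) : x = x 0 • ![(1:ℂ),0] + x 1 • ![(0:ℂ),1] := by
  funext k; fin_cases k <;> simp

lemma Papp (P : (Fin 2 → ℂ) →ₗ[ℂ] (Fin 2 → ℂ)) (x : Fin 2 → ℂ) (k : Fin 2) :
    P x k = x 0 * P ![1,0] k + x 1 * P ![0,1] k := by
  conv_lhs => rw [vec_decomp' x, map_add, map_smul, map_smul]
  simp

lemma rb_iff (P : (Fin 2 → ℂ) →ₗ[ℂ] (Fin 2 → ℂ)) :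
    IsRotaBaxter !![1,1;-1,-1] 1 P ↔ ∀ x y : Fin 2 → ℂ, ∀ k : Fin 2,
      P x 0 * P y 0 - P x 1 * P y 1 =
        (x 0 * P y 0 - x 1 * P y 1 + (P x 0 * y 0 - P x 1 * y 1) + (x 0 * y 0 - x 1 * y 1))
          * (P ![1,0] k + P ![0,1] k) := by
  constructor
  · intro h x y k
    have hk := congrFun (h x y) k
    rw [Papp P _ k] at hk
    fin_cases k <;> simp [evMulC] at hk ⊢ <;> linear_combination hk
  · intro h x y
    funext k
    rw [Papp P _ k]
    have hk := h x y k
    fin_cases k <;> simp [evMulC] at hk ⊢ <;> linear_combination hk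

/-- Rota–Baxter operators of weight 1 on `E₃` (`e₁e₁ = e₁+e₂, e₂e₂ = -e₁-e₂`). -/
theorem rb_weight1_E3 (P : (Fin 2 → ℂ) →ₗ[ℂ] (Fin 2 → ℂ)) :
    IsRotaBaxter !![1, 1; -1, -1] 1 P ↔
      ∃ b : ℂ,
        (P ![1, 0] = ![-1 + b, b] ∧ P ![0, 1] = ![-b, -1 - b]) ∨
        (P ![1, 0] = ![-1 - b, b] ∧ P ![0, 1] = ![b, -1 - b]) ∨
        (P ![1, 0] = ![b, b] ∧ P ![0, 1] = ![-b, -b]) ∨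
        (P ![1, 0] = ![-b, b] ∧ P ![0, 1] = ![b, -b]) := by
  rw [rb_iff]
  set a := P ![1,0] 0 with ha
  set b := P ![1,0] 1 with hb
  set c := P ![0,1] 0 with hc
  set d := P ![0,1] 1 with hd
  have hP1 : P ![1,0] = ![a, b] := by funext k; fin_cases k <;> simp [ha, hb]
  have hP2 : P ![0,1] = ![c, d] := by funext k; fin_cases k <;> simp [hc, hd]
  constructor
  · intro h
    have E1 := h ![1,0] ![1,0] 0
    have E2 := h ![1,0] ![1,0] 1
    have E3 := h ![0,1] ![0,1] 0
    have E4 := h ![0,1] ![0,1] 1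
    have E5 := h ![1,0] ![0,1] 0
    have E6 := h ![1,0] ![0,1] 1
    simp only [Matrix.cons_val_zero, Matrix.cons_val_one, Matrix.head_cons,
      mul_one, mul_zero, one_mul, zero_mul, sub_zero, zero_sub] at E1 E2 E3 E4 E5 E6
    simp only [← ha, ← hb, ← hc, ← hd] at E1 E2 E3 E4 E5 E6
    -- first: a + c = b + d
    have hs : a + c = b + d := by
      by_contra hne
      have h1 : (2*a+1) * ((a+c) - (b+d)) = 0 := by linear_combination E2 - E1
      have h2 : (2*d+1) * ((a+c) - (b+d)) = 0 := by linear_combination E3 - E4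
      have h3 : (c - b) * ((a+c) - (b+d)) = 0 := by linear_combination E6 - E5
      have hne' : (a+c) - (b+d) ≠ 0 := sub_ne_zero.mpr hne
      have ha1 : 2*a+1 = 0 := (mul_eq_zero.mp h1).resolve_right hne'
      have hd1 : 2*d+1 = 0 := (mul_eq_zero.mp h2).resolve_right hne'
      have hcb : c - b = 0 := (mul_eq_zero.mp h3).resolve_right hne'
      exact hne (by linear_combination (1/2)*ha1 - (1/2)*hd1 + hcb)
    have hbc : (b - c) * (b + c) = 0 := by linear_combination E5 - b*hs
    rcases mul_eq_zero.mp hbc with h' | h'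
    · -- c = b, d = a;  (a+b)(a+b+1) = 0
      have hcb : c = b := by linear_combination -h'
      have hda : d = a := by linear_combination -hs - h'
      have hfac : (a + b) * (a + b + 1) = 0 := by
        linear_combination -E1 - (2*a+1)*hcb
      rcases mul_eq_zero.mp hfac with h'' | h''
      · -- a = -b : family 4
        have ha' : a = -b := by linear_combination h''
        have hd' : d = -b := by linear_combination hda + h''
        exact ⟨b, Or.inr (Or.inr (Or.inr ⟨by rw [hP1, ha'], by rw [hP2, hcb, hd']⟩))⟩
      · -- a = -1 - b : family 2
        have ha' : a = -1 - b := by linear_combination h''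
        have hd' : d = -1 - b := by linear_combination hda + h''
        exact ⟨b, Or.inr (Or.inl ⟨by rw [hP1, ha'], by rw [hP2, hcb, hd']⟩)⟩
    · -- c = -b, d = a - 2b;  (a-b)(a-b+1) = 0
      have hcb : c = -b := by linear_combination h'
      have hda : d = a - 2*b := by linear_combination -hs + h'
      have hfac : (a - b) * (a - b + 1) = 0 := by
        linear_combination -E1 - (2*a+1)*hcb
      rcases mul_eq_zero.mp hfac with h'' | h''
      · -- a = b : family 3
        have ha' : a = b := by linear_combination h''
        have hd' : d = -b := by linear_combination hda + h''
        exact ⟨b, Or.inr (Or.inr (Or.inl ⟨by rw [hP1, ha'], by rw [hP2, hcb, hd']⟩))⟩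
      · -- a = -1 + b : family 1
        have ha' : a = -1 + b := by linear_combination h''
        have hd' : d = -1 - b := by linear_combination hda + h''
        exact ⟨b, Or.inl ⟨by rw [hP1, ha'], by rw [hP2, hcb, hd']⟩⟩
  · rintro ⟨t, h | h | h | h⟩ <;> obtain ⟨h1, h2⟩ := h <;> intro x y k <;>
      rw [Papp P x 0, Papp P x 1, Papp P y 0, Papp P y 1, h1, h2] <;>
      fin_cases k <;> simp <;> ring
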